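/- Let p be an odd prime and n ≥ 2 with n ≤ √p. Suppose that for all f_0 ∈ F_p with f_0 ≠ 0 and all f_2 ∈ F_p, the Kloosterman-type sum |Σ_{ν=1}^{⌈n/2⌉} e_p(f_0/ν + f_2·ν)| is at most 0.1·n. Then for t = ⌈p/8⌉ and any ℓ ∈ {0,1,...,n}: every polynomial f ∈ F_p[x] of degree at most 2 satisfying that for all i ∈ {0,...,n} \ {ℓ}, the element f(i)/(i - ℓ) has integer representative in [-t, t], must satisfy f(ℓ) = 0. -/

import Mathlib

open Complex Finset Polynomial

noncomputable def ep (p : ℕ) (a : ZMod p) : ℂ :=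
  Complex.exp (2 * Real.pi * Complex.I * (a.val : ℂ) / p)

lemma ep_eq (p : ℕ) (a : ZMod p) :
    ep p a = Complex.exp (((2 * Real.pi * a.val / p : ℝ) : ℂ) * Complex.I) := by
  unfold ep; congr 1; push_cast; ring

lemma abs_ep (p : ℕ) (a : ZMod p) : ‖ep p a‖ = 1 := by
  rw [ep_eq]; exact Complex.norm_exp_ofReal_mul_I _

lemma ep_ne_zero (p : ℕ) (a : ZMod p) : ep p a ≠ 0 := Complex.exp_ne_zero _

lemma ep_re (p : ℕ) (a : ZMod p) : (ep p a).re = Real.cos (2 * Real.pi * a.val / p) := by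
  rw [ep_eq]; exact Complex.exp_ofReal_mul_I_re _

lemma epnat (p : ℕ) [NeZero p] (k : ℕ) :
    Complex.exp (2 * Real.pi * Complex.I * (k : ℂ) / p) = ep p ((k : ZMod p)) := by
  unfold ep
  have hj' : (k : ℂ) = (((k : ZMod p)).val : ℂ) + p * ((k / p : ℕ) : ℂ) := by
    rw [ZMod.val_natCast]; exact_mod_cast (Nat.mod_add_div k p).symm
  have hp : (p : ℂ) ≠ 0 := Nat.cast_ne_zero.2 (NeZero.ne p)
  rw [show 2 * Real.pi * Complex.I * (k:ℂ)/p
      = 2 * Real.pi * Complex.I * (((k : ZMod p)).val : ℂ)/p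
        + ((k/p : ℕ) : ℂ) * (2*Real.pi*Complex.I) by rw [hj']; field_simp,
    Complex.exp_add, Complex.exp_nat_mul_two_pi_mul_I, mul_one]

lemma ep_add (p : ℕ) [NeZero p] (a b : ZMod p) : ep p (a + b) = ep p a * ep p b := by
  have h1 : ((a.val : ℕ) : ZMod p) = a := by rw [ZMod.natCast_val, ZMod.cast_id]
  have h2 : ((b.val : ℕ) : ZMod p) = b := by rw [ZMod.natCast_val, ZMod.cast_id]
  conv_lhs => rw [show a + b = (((a.val + b.val : ℕ)) : ZMod p) by push_cast [h1, h2]; ring]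
  conv_rhs => rw [← h1, ← h2]
  rw [← epnat, ← epnat p a.val, ← epnat p b.val, ← Complex.exp_add]
  congr 1
  push_cast
  ring

lemma ep_zero (p : ℕ) : ep p 0 = 1 := by
  unfold ep; simp

lemma conj_ep (p : ℕ) [NeZero p] (a : ZMod p) : (starRingEnd ℂ) (ep p a) = ep p (-a) := by
  have h : ep p a * ep p (-a) = 1 := by rw [← ep_add]; simp [ep_zero]
  have h2 : (starRingEnd ℂ) (ep p a) * ep p a = 1 := by
    have := Complex.normSq_eq_norm_sq (ep p a)
    rw [abs_ep] at this
    rw [mul_comm, Complex.mul_conj, this]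
    norm_num
  calc (starRingEnd ℂ) (ep p a) = (starRingEnd ℂ) (ep p a) * (ep p a * ep p (-a)) := by rw [h, mul_one]
  _ = ((starRingEnd ℂ) (ep p a) * ep p a) * ep p (-a) := by ring
  _ = ep p (-a) := by rw [h2, one_mul]

lemma sum_ep (p : ℕ) [NeZero p] (hp : 2 ≤ p) : ∑ x : ZMod p, ep p x = 0 := by
  have hbij : ∑ x : ZMod p, ep p x = ∑ k ∈ Finset.range p, ep p ((k : ZMod p)) := by
    rw [← Fin.sum_univ_eq_sum_range (fun k => ep p ((k : ZMod p))) p]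
    refine (Fintype.sum_bijective (fun k : Fin p => ((k : ℕ) : ZMod p)) ⟨?_, ?_⟩ _ _ (fun k => rfl)).symm
    · intro j k h
      have := congrArg ZMod.val h
      rw [ZMod.val_natCast_of_lt j.2, ZMod.val_natCast_of_lt k.2] at this
      exact Fin.ext this
    · intro x
      exact ⟨⟨x.val, ZMod.val_lt x⟩, by simp [ZMod.natCast_val, ZMod.cast_id]⟩
  set ζ : ℂ := Complex.exp (2 * Real.pi * Complex.I / p) with hζ
  have hpow : ∀ k : ℕ, ep p ((k : ZMod p)) = ζ ^ k := by
    intro k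
    rw [← epnat, hζ, ← Complex.exp_nat_mul]
    congr 1; ring
  have hζp : ζ ^ p = 1 := by
    rw [hζ, ← Complex.exp_nat_mul]
    have hp0 : (p : ℂ) ≠ 0 := Nat.cast_ne_zero.2 (by omega)
    rw [show (p : ℂ) * (2 * Real.pi * Complex.I / p) = 2 * Real.pi * Complex.I by field_simp]
    exact Complex.exp_two_pi_mul_I
  have hζ1 : ζ ≠ 1 := by
    rw [hζ]
    intro h
    rw [Complex.exp_eq_one_iff] at h
    obtain ⟨m, hm⟩ := h
    have hp0 : (p : ℂ) ≠ 0 := Nat.cast_ne_zero.2 (by omega)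
    have h2 : (2 * Real.pi * Complex.I) * 1 = (2 * Real.pi * Complex.I) * (m * p) := by
      field_simp at hm ⊢
      linear_combination hm
    have hI : (2 * Real.pi * Complex.I) ≠ 0 := by
      simp [Complex.I_ne_zero, Real.pi_ne_zero]
    have h3 : (1 : ℂ) = m * p := mul_left_cancel₀ hI h2
    have h4 : (1 : ℝ) = (m : ℝ) * p := by exact_mod_cast congrArg Complex.re h3
    have hp1 : (2:ℝ) ≤ (p:ℝ) := by exact_mod_cast hp
    rcases le_or_gt 1 m with hm1 | hm1
    · have : (1:ℝ) ≤ (m:ℝ) := by exact_mod_cast hm1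
      nlinarith
    · have hm0 : m ≤ 0 := by omega
      have : (m:ℝ) ≤ 0 := by exact_mod_cast hm0
      nlinarith
  rw [hbij]
  calc ∑ k ∈ Finset.range p, ep p ((k : ZMod p)) = ∑ k ∈ Finset.range p, ζ ^ k := by
        exact Finset.sum_congr rfl fun k _ => hpow k
  _ = (ζ ^ p - 1) / (ζ - 1) := geom_sum_eq hζ1 p
  _ = 0 := by rw [hζp]; simp

lemma sum_ep_mul (p : ℕ) [NeZero p] (hp : 2 ≤ p) (a : ZMod p) (ha : a ≠ 0) [Fact p.Prime] :
    ∑ x : ZMod p, ep p (x * a) = 0 := by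
  rw [Fintype.sum_bijective (fun x : ZMod p => x * a) (Equiv.mulRight₀ a ha).bijective _ (fun y => ep p y) (fun x => rfl)]
  exact sum_ep p hp

lemma kloo_avg (p : ℕ) [Fact p.Prime] (m : ℕ) (hm1 : 1 ≤ m) (hmp : m < p) :
    ∃ f2 : ZMod p, 1 ≤ ‖∑ ν ∈ Finset.Icc 1 m,
      ep p ((1 : ZMod p) / (ν : ZMod p) + f2 * (ν : ZMod p))‖ := by
  have hp2 : 2 ≤ p := (Fact.out : p.Prime).two_le
  by_contra hcon
  push_neg at hcon
  set K : ZMod p → ℂ := fun f2 => ∑ ν ∈ Finset.Icc 1 m,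
      ep p ((1 : ZMod p) / (ν : ZMod p) + f2 * (ν : ZMod p)) with hK
  have hinj : ∀ ν ∈ Finset.Icc 1 m, ∀ ν' ∈ Finset.Icc 1 m,
      ((ν : ZMod p) = (ν' : ZMod p)) → ν = ν' := by
    intro ν hν ν' hν' h
    have h1 := Finset.mem_Icc.1 hν
    have h2 := Finset.mem_Icc.1 hν'
    have := congrArg ZMod.val h
    rwa [ZMod.val_natCast_of_lt (by omega), ZMod.val_natCast_of_lt (by omega)] at this
  have key : ∑ f2 : ZMod p, K f2 * (starRingEnd ℂ) (K f2) = (p : ℂ) * m := by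
    have step1 : ∀ f2 : ZMod p, K f2 * (starRingEnd ℂ) (K f2)
        = ∑ ν ∈ Finset.Icc 1 m, ∑ ν' ∈ Finset.Icc 1 m,
          ep p ((1 : ZMod p)/(ν : ZMod p) - 1/(ν' : ZMod p)) * ep p (f2 * ((ν : ZMod p) - (ν' : ZMod p))) := by
      intro f2
      rw [hK, map_sum, Finset.sum_mul_sum]
      refine Finset.sum_congr rfl fun ν _ => Finset.sum_congr rfl fun ν' _ => ?_
      rw [conj_ep, ← ep_add, ← ep_add]
      congr 1
      ring
    rw [Finset.sum_congr rfl fun f2 _ => step1 f2, Finset.sum_comm]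
    have step2 : ∀ ν ∈ Finset.Icc 1 m, (∑ f2 : ZMod p, ∑ ν' ∈ Finset.Icc 1 m,
        ep p ((1 : ZMod p)/(ν : ZMod p) - 1/(ν' : ZMod p)) * ep p (f2 * ((ν : ZMod p) - (ν' : ZMod p)))) = (p : ℂ) := by
      intro ν hν
      rw [Finset.sum_comm]
      have inner : ∀ ν' ∈ Finset.Icc 1 m, (∑ f2 : ZMod p,
          ep p ((1 : ZMod p)/(ν : ZMod p) - 1/(ν' : ZMod p)) * ep p (f2 * ((ν : ZMod p) - (ν' : ZMod p))))
          = if ν' = ν then (p : ℂ) else 0 := by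
        intro ν' hν'
        rw [← Finset.mul_sum]
        by_cases h : ν' = ν
        · subst h
          simp only [sub_self, if_true, mul_zero, ep_zero, one_mul]
          simp [Finset.card_univ, ZMod.card]
        · rw [if_neg h]
          have ha : (ν : ZMod p) - (ν' : ZMod p) ≠ 0 := by
            intro hz
            exact h (hinj ν' hν' ν hν (by linear_combination -hz))
          rw [sum_ep_mul p hp2 _ ha, mul_zero]
      rw [Finset.sum_congr rfl inner, Finset.sum_ite_eq' (Finset.Icc 1 m) ν (fun _ => (p:ℂ)), if_pos hν]
    rw [Finset.sum_congr rfl step2, Finset.sum_const, Nat.card_Icc]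
    simp
    ring
  -- upper bound
  have upper : (∑ f2 : ZMod p, Complex.normSq (K f2)) < p := by
    have : ∀ f2 : ZMod p, Complex.normSq (K f2) < 1 := by
      intro f2
      have h1 := hcon f2
      have := Complex.normSq_eq_norm_sq (K f2)
      rw [this]
      nlinarith [norm_nonneg (K f2)]
    calc (∑ f2 : ZMod p, Complex.normSq (K f2)) < ∑ _f2 : ZMod p, (1:ℝ) := by
          apply Finset.sum_lt_sum_of_nonempty
          · exact Finset.univ_nonempty
          · intro i _; exact this i
    _ = p := by simp [ZMod.card]
  have lower : (p : ℝ) * m = (∑ f2 : ZMod p, Complex.normSq (K f2)) := by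
    have : ((∑ f2 : ZMod p, Complex.normSq (K f2) : ℝ) : ℂ) = (p : ℂ) * m := by
      push_cast
      rw [← key]
      exact Finset.sum_congr rfl fun f2 _ => (Complex.mul_conj (K f2)).symm
    exact_mod_cast this.symm
  have hm1' : (1:ℝ) ≤ m := by exact_mod_cast hm1
  have hp1' : (0:ℝ) < p := by positivity
  nlinarith

lemma ep_re_ge (p : ℕ) [NeZero p] (hp : 100 ≤ p) (a : ZMod p)
    (h : |a.valMinAbs| ≤ (⌈(p : ℝ) / 8⌉₊ : ℤ)) : (0.61 : ℝ) ≤ (ep p a).re := by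
  have hp0 : (0:ℝ) < p := by positivity
  have hp100 : (100:ℝ) ≤ p := by exact_mod_cast hp
  set t : ℕ := ⌈(p : ℝ) / 8⌉₊ with ht
  have htle : (t : ℝ) ≤ (p:ℝ)/8 + 1 := le_of_lt (Nat.ceil_lt_add_one (by positivity))
  set k : ℤ := if a.val ≤ p / 2 then 0 else 1 with hk
  have hvr : (a.val : ℝ) = (a.valMinAbs : ℝ) + (k : ℝ) * p := by
    have hval := ZMod.val_eq_ite_valMinAbs a
    have h2 : ((a.val:ℤ):ℝ) = ((a.valMinAbs + k * p : ℤ) : ℝ) := by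
      congr 1
      rw [hval, hk]
      split_ifs <;> push_cast <;> ring
    push_cast at h2
    exact_mod_cast h2
  have hre : (ep p a).re = Real.cos (2 * Real.pi * (a.valMinAbs : ℝ) / p) := by
    have : ep p a = Complex.exp (((2 * Real.pi * (a.valMinAbs : ℝ) / p : ℝ) : ℂ) * Complex.I)
        * Complex.exp ((k : ℂ) * (2 * Real.pi * Complex.I)) := by
      rw [ep_eq, ← Complex.exp_add]
      congr 1
      have hpc : (p : ℂ) ≠ 0 := Nat.cast_ne_zero.2 (by omega)
      have hvc : ((a.val : ℕ) : ℂ) = ((a.valMinAbs : ℤ) : ℂ) + (k : ℂ) * p := by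
        exact_mod_cast congrArg (Complex.ofReal) hvr
      push_cast [hvc]
      field_simp
    rw [this, Complex.exp_int_mul_two_pi_mul_I, mul_one]
    exact Complex.exp_ofReal_mul_I_re _
  rw [hre]
  have hpi1 : Real.pi ≤ 3.15 := by linarith [Real.pi_lt_d2]
  have hpi0 : 0 < Real.pi := Real.pi_pos
  set x : ℝ := 2 * Real.pi * (a.valMinAbs : ℝ) / p
  set y : ℝ := 2 * Real.pi * (t : ℝ) / p with hy
  have habs : |x| ≤ y := by
    rw [abs_div, abs_of_pos hp0, div_le_div_iff_of_pos_right hp0, abs_mul,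
      abs_of_pos (by positivity : (0:ℝ) < 2 * Real.pi)]
    have h2 : |(a.valMinAbs : ℝ)| ≤ (t : ℝ) := by exact_mod_cast h
    nlinarith
  have hyle : y ≤ 0.8505 := by
    rw [hy, div_le_iff₀ hp0]
    have h1 : (t:ℝ) ≤ 0.135 * p := by
      have : (1:ℝ) ≤ (p:ℝ)/100 := by linarith
      linarith
    calc 2 * Real.pi * (t:ℝ) ≤ 2 * Real.pi * (0.135 * p) := by
          exact mul_le_mul_of_nonneg_left h1 (by positivity)
    _ ≤ 0.8505 * p := by nlinarith
  have hy0 : 0 ≤ y := by positivity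
  have hypi : y ≤ Real.pi := by nlinarith [Real.pi_gt_three]
  calc (0.61:ℝ) ≤ 1 - y^2/2 := by nlinarith
  _ ≤ Real.cos y := Real.one_sub_sq_div_two_le_cos
  _ ≤ Real.cos |x| := Real.cos_le_cos_of_nonneg_of_le_pi (abs_nonneg x) hypi habs
  _ = Real.cos x := Real.cos_abs x

theorem stmt_12 (p n : ℕ) [Fact p.Prime] (hodd : Odd p) (hn : 2 ≤ n)
    (hnp : (n : ℝ) ≤ Real.sqrt p)
    (hkloo : ∀ f0 : ZMod p, f0 ≠ 0 → ∀ f2 : ZMod p,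
      ‖∑ ν ∈ Finset.Icc 1 ⌈(n : ℝ) / 2⌉₊,
        Complex.exp (2 * Real.pi * Complex.I *
          (((f0 / (ν : ZMod p) + f2 * (ν : ZMod p)).val : ℕ) : ℂ) / (p : ℂ))‖
        ≤ 0.1 * n) :
    ∀ ℓ : ℕ, ℓ ≤ n → ∀ f : Polynomial (ZMod p), f.degree ≤ 2 →
      (∀ i : ℕ, i ≤ n → i ≠ ℓ →
        |(f.eval (i : ZMod p) / ((i : ZMod p) - (ℓ : ZMod p))).valMinAbs| ≤
          (⌈(p : ℝ) / 8⌉₊ : ℤ)) →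
      f.eval (ℓ : ZMod p) = 0 := by
  have hkloo' : ∀ f0 : ZMod p, f0 ≠ 0 → ∀ f2 : ZMod p,
      ‖∑ ν ∈ Finset.Icc 1 ⌈(n : ℝ) / 2⌉₊,
        ep p (f0 / (ν : ZMod p) + f2 * (ν : ZMod p))‖ ≤ 0.1 * n := hkloo
  clear hkloo
  intro ℓ hℓ f hdeg hbound
  by_contra hf0
  have hp : p.Prime := Fact.out
  have hp2 : 2 ≤ p := hp.two_le
  have hn2p : n^2 ≤ p := by
    have h1 : ((n:ℝ))^2 ≤ p := by
      nlinarith [Real.sqrt_nonneg (p:ℝ), Real.sq_sqrt (show (0:ℝ) ≤ p by positivity),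
        (by exact_mod_cast Nat.zero_le n : (0:ℝ) ≤ (n:ℝ))]
    exact_mod_cast h1
  have hnltp : n < p := by nlinarith
  have hnR : (2:ℝ) ≤ n := by exact_mod_cast hn
  set m : ℕ := ⌈(n : ℝ) / 2⌉₊ with hm
  have hm_ge : (n:ℝ)/2 ≤ m := Nat.le_ceil _
  have hmn : m ≤ n := by
    rw [hm]
    exact Nat.ceil_le.2 (by linarith)
  have hm1 : 1 ≤ m := by
    by_contra h
    push_neg at h
    interval_cases m
    · simp at hm_ge; linarith
  rcases lt_or_ge n 10 with hsmall | hbig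
  · -- small case
    obtain ⟨f2, hf2⟩ := kloo_avg p m hm1 (lt_of_le_of_lt hmn hnltp)
    have h2 := hkloo' 1 one_ne_zero f2
    have h9 : (n:ℝ) ≤ 9 := by exact_mod_cast Nat.lt_succ_iff.1 hsmall
    have : (0.1:ℝ) * n ≤ 0.9 := by linarith
    linarith
  · -- main case
    have hp100 : 100 ≤ p := le_trans (by nlinarith) hn2p
    set ℓc : ZMod p := ((ℓ : ℕ) : ZMod p) with hℓc
    -- taylor expansion
    have hnat : f.natDegree ≤ 2 := Polynomial.natDegree_le_iff_degree_le.2 hdeg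
    obtain ⟨g1, g2, heval⟩ : ∃ g1 g2 : ZMod p, ∀ x : ZMod p,
        f.eval x = f.eval ℓc + g1 * (x - ℓc) + g2 * (x - ℓc)^2 := by
      set g : Polynomial (ZMod p) := Polynomial.taylor ℓc f with hgdef
      have hgdeg : g.natDegree < 3 := by rw [hgdef, Polynomial.natDegree_taylor]; omega
      refine ⟨g.coeff 1, g.coeff 2, fun x => ?_⟩
      have h1 : g.eval (x - ℓc) = f.eval x := Polynomial.taylor_eval_sub ℓc f x
      have hc0 : g.coeff 0 = f.eval ℓc := Polynomial.taylor_coeff_zero ℓc f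
      rw [← h1, Polynomial.eval_eq_sum_range' hgdeg, Finset.sum_range_succ,
        Finset.sum_range_succ, Finset.sum_range_one, hc0]
      ring
    have hν_ne : ∀ ν : ℕ, 1 ≤ ν → ν ≤ n → ((ν : ℕ) : ZMod p) ≠ 0 := by
      intro ν h1 h2 hz
      rw [ZMod.natCast_eq_zero_iff] at hz
      have := Nat.le_of_dvd (by omega) hz
      omega
    set A : Finset ℕ := (Finset.range (n+1)).erase ℓ with hA
    have hcardA : A.card = n := by
      rw [hA, Finset.card_erase_of_mem (Finset.mem_range.2 (by omega)), Finset.card_range]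
      omega
    set S : ℂ := ∑ i ∈ A, ep p (f.eval ((i : ℕ) : ZMod p) / (((i : ℕ) : ZMod p) - ℓc)) with hS
    have hlower : (0.61:ℝ) * n ≤ ‖S‖ := by
      have h1 : (0.61:ℝ) * n ≤ S.re := by
        rw [hS, Complex.re_sum]
        calc (0.61:ℝ) * n = ∑ _i ∈ A, (0.61:ℝ) := by rw [Finset.sum_const, hcardA]; ring
        _ ≤ ∑ i ∈ A, (ep p (f.eval ((i : ℕ) : ZMod p) / (((i : ℕ) : ZMod p) - ℓc))).re := by
            refine Finset.sum_le_sum fun i hi => ?_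
            rw [hA, Finset.mem_erase, Finset.mem_range] at hi
            exact ep_re_ge p hp100 _ (hbound i (by omega) hi.1)
      calc (0.61:ℝ) * n ≤ S.re := h1
      _ ≤ |S.re| := le_abs_self _
      _ ≤ ‖S‖ := Complex.abs_re_le_norm S
    -- upper bound
    have hnm : ((n - m : ℕ) : ℝ) ≤ (n:ℝ)/2 := by
      have hc : ((n - m : ℕ) : ℝ) = (n:ℝ) - m := by push_cast [hmn]; ring
      linarith
    have hupper : ‖S‖ ≤ 0.1 * n + ((n - m : ℕ) : ℝ) := by
      rcases le_or_gt m (n - ℓ) with hcase | hcase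
      · -- right case
        set B : Finset ℕ := (Finset.Icc 1 m).image (fun ν => ν + ℓ) with hB
        have hBsub : B ⊆ A := by
          intro i hi
          rw [hB, Finset.mem_image] at hi
          obtain ⟨ν, hν, rfl⟩ := hi
          rw [Finset.mem_Icc] at hν
          rw [hA]
          exact Finset.mem_erase.2 ⟨by omega, Finset.mem_range.2 (by omega)⟩
        have hinj : ∀ x ∈ Finset.Icc 1 m, ∀ y ∈ Finset.Icc 1 m, x + ℓ = y + ℓ → x = y := by
          intro x _ y _ h; omega
        have hcardB : B.card = m := by
          rw [hB, Finset.card_image_of_injOn (fun x hx y hy h => hinj x hx y hy h), Nat.card_Icc]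
          omega
        have hBsum : (∑ i ∈ B, ep p (f.eval ((i : ℕ) : ZMod p) / (((i : ℕ) : ZMod p) - ℓc)))
            = ep p g1 * ∑ ν ∈ Finset.Icc 1 m, ep p (f.eval ℓc / (ν : ZMod p) + g2 * (ν : ZMod p)) := by
          rw [hB, Finset.sum_image hinj, Finset.mul_sum]
          refine Finset.sum_congr rfl fun ν hν => ?_
          rw [Finset.mem_Icc] at hν
          have hne : ((ν : ℕ) : ZMod p) ≠ 0 := hν_ne ν hν.1 (le_trans hν.2 hmn)
          have hc : ((ν + ℓ : ℕ) : ZMod p) = ((ν : ℕ) : ZMod p) + ℓc := by push_cast; ring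
          rw [hc, ← ep_add]
          congr 1
          have hx : ((ν : ℕ) : ZMod p) + ℓc - ℓc = ((ν : ℕ) : ZMod p) := by ring
          rw [heval, hx]
          field_simp
          ring
        have h1 : S = (∑ i ∈ A \ B, ep p (f.eval ((i : ℕ) : ZMod p) / (((i : ℕ) : ZMod p) - ℓc)))
            + ∑ i ∈ B, ep p (f.eval ((i : ℕ) : ZMod p) / (((i : ℕ) : ZMod p) - ℓc)) :=
          (Finset.sum_sdiff hBsub).symm
        have htriv : ‖∑ i ∈ A \ B, ep p (f.eval ((i : ℕ) : ZMod p) / (((i : ℕ) : ZMod p) - ℓc))‖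
            ≤ ((n - m : ℕ) : ℝ) := by
          calc ‖∑ i ∈ A \ B, ep p (f.eval ((i : ℕ) : ZMod p) / (((i : ℕ) : ZMod p) - ℓc))‖
              ≤ ∑ i ∈ A \ B, ‖ep p (f.eval ((i : ℕ) : ZMod p) / (((i : ℕ) : ZMod p) - ℓc))‖ :=
                norm_sum_le _ _
          _ = ((A \ B).card : ℝ) := by simp [abs_ep]
          _ = ((n - m : ℕ) : ℝ) := by rw [Finset.card_sdiff_of_subset hBsub, hcardA, hcardB]
        have hK : ‖∑ ν ∈ Finset.Icc 1 m, ep p (f.eval ℓc / (ν : ZMod p) + g2 * (ν : ZMod p))‖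
            ≤ 0.1 * n := hkloo' (f.eval ℓc) hf0 g2
        calc ‖S‖ ≤ ((n - m : ℕ) : ℝ)
              + ‖ep p g1 * ∑ ν ∈ Finset.Icc 1 m, ep p (f.eval ℓc / (ν : ZMod p) + g2 * (ν : ZMod p))‖ := by
              rw [h1, hBsum]
              exact le_trans (norm_add_le _ _) (add_le_add_left htriv _)
        _ ≤ 0.1 * n + ((n - m : ℕ) : ℝ) := by
              rw [norm_mul, abs_ep, one_mul]
              linarith
      · -- left case
        have h2m : 2 * m ≤ n + 1 := by
          have hq : n ≤ 2 * ((n+1)/2) := by omega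
          have hq' : (n:ℝ) ≤ 2 * (((n+1)/2 : ℕ) : ℝ) := by exact_mod_cast hq
          have := Nat.ceil_le.2 (show (n:ℝ)/2 ≤ (((n+1)/2 : ℕ) : ℝ) by linarith)
          omega
        have hmℓ : m ≤ ℓ := by omega
        set B : Finset ℕ := (Finset.Icc 1 m).image (fun ν => ℓ - ν) with hB
        have hBsub : B ⊆ A := by
          intro i hi
          rw [hB, Finset.mem_image] at hi
          obtain ⟨ν, hν, rfl⟩ := hi
          rw [Finset.mem_Icc] at hν
          rw [hA]
          exact Finset.mem_erase.2 ⟨by omega, Finset.mem_range.2 (by omega)⟩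
        have hinj : ∀ x ∈ Finset.Icc 1 m, ∀ y ∈ Finset.Icc 1 m, ℓ - x = ℓ - y → x = y := by
          intro x hx y hy h
          rw [Finset.mem_Icc] at hx hy
          omega
        have hcardB : B.card = m := by
          rw [hB, Finset.card_image_of_injOn (fun x hx y hy h => hinj x hx y hy h), Nat.card_Icc]
          omega
        have hBsum : (∑ i ∈ B, ep p (f.eval ((i : ℕ) : ZMod p) / (((i : ℕ) : ZMod p) - ℓc)))
            = ep p g1 * ∑ ν ∈ Finset.Icc 1 m, ep p ((-(f.eval ℓc)) / (ν : ZMod p) + (-g2) * (ν : ZMod p)) := by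
          rw [hB, Finset.sum_image hinj, Finset.mul_sum]
          refine Finset.sum_congr rfl fun ν hν => ?_
          rw [Finset.mem_Icc] at hν
          have hne : ((ν : ℕ) : ZMod p) ≠ 0 := hν_ne ν hν.1 (le_trans hν.2 hmn)
          have hc : ((ℓ - ν : ℕ) : ZMod p) = ℓc - ((ν : ℕ) : ZMod p) := by
            push_cast [Nat.cast_sub (le_trans hν.2 hmℓ)]
            ring
          rw [hc, ← ep_add]
          congr 1
          have hx : ℓc - ((ν : ℕ) : ZMod p) - ℓc = -((ν : ℕ) : ZMod p) := by ring
          rw [heval, hx, div_eq_iff (neg_ne_zero.2 hne)]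
          field_simp
          try ring
        have h1 : S = (∑ i ∈ A \ B, ep p (f.eval ((i : ℕ) : ZMod p) / (((i : ℕ) : ZMod p) - ℓc)))
            + ∑ i ∈ B, ep p (f.eval ((i : ℕ) : ZMod p) / (((i : ℕ) : ZMod p) - ℓc)) :=
          (Finset.sum_sdiff hBsub).symm
        have htriv : ‖∑ i ∈ A \ B, ep p (f.eval ((i : ℕ) : ZMod p) / (((i : ℕ) : ZMod p) - ℓc))‖
            ≤ ((n - m : ℕ) : ℝ) := by
          calc ‖∑ i ∈ A \ B, ep p (f.eval ((i : ℕ) : ZMod p) / (((i : ℕ) : ZMod p) - ℓc))‖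
              ≤ ∑ i ∈ A \ B, ‖ep p (f.eval ((i : ℕ) : ZMod p) / (((i : ℕ) : ZMod p) - ℓc))‖ :=
                norm_sum_le _ _
          _ = ((A \ B).card : ℝ) := by simp [abs_ep]
          _ = ((n - m : ℕ) : ℝ) := by rw [Finset.card_sdiff_of_subset hBsub, hcardA, hcardB]
        have hK : ‖∑ ν ∈ Finset.Icc 1 m, ep p ((-(f.eval ℓc)) / (ν : ZMod p) + (-g2) * (ν : ZMod p))‖
            ≤ 0.1 * n := hkloo' (-(f.eval ℓc)) (neg_ne_zero.2 hf0) (-g2)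
        calc ‖S‖ ≤ ((n - m : ℕ) : ℝ)
              + ‖ep p g1 * ∑ ν ∈ Finset.Icc 1 m, ep p ((-(f.eval ℓc)) / (ν : ZMod p) + (-g2) * (ν : ZMod p))‖ := by
              rw [h1, hBsum]
              exact le_trans (norm_add_le _ _) (add_le_add_left htriv _)
        _ ≤ 0.1 * n + ((n - m : ℕ) : ℝ) := by
              rw [norm_mul, abs_ep, one_mul]
              linarith
    linarith
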